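/- Let a < b, let f : [a,b] → ℝ be càdlàg on [a,b], and let c > 0. Define u : [a,b] → ℝ by u(a) := 0 and u(s) := UTV^c(f,[a,s]) for s ∈ (a,b]. Then u is nondecreasing on [a,b], u is right-continuous at every point of [a,b), u has a finite left limit at every point of (a,b], and u is continuous at every point of (a,b) at which f is continuous. -/

import Mathlib

open Set Filter Topology ENNReal

/-- Truncated variation `TV^c(f,[a,b])` as a supremum over partitions, valued in `[0,∞]`. -/
noncomputable def truncVar (f : ℝ → ℝ) (a b c : ℝ) : ℝ≥0∞ :=
  ⨆ (n : ℕ) (t : ℕ → ℝ) (_ : a ≤ t 0) (_ : ∀ i < n, t i < t (i + 1)) (_ : t n ≤ b),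
    ∑ i ∈ Finset.range n, ENNReal.ofReal (max (|f (t (i + 1)) - f (t i)| - c) 0)

/-- Total variation `TV(f,[a,b])`, valued in `[0,∞]`. -/
noncomputable def totalVar (f : ℝ → ℝ) (a b : ℝ) : ℝ≥0∞ := truncVar f a b 0

/-- Upward truncated variation `UTV^c(f,[a,b])`. -/
noncomputable def upTruncVar (f : ℝ → ℝ) (a b c : ℝ) : ℝ≥0∞ :=
  ⨆ (n : ℕ) (t : ℕ → ℝ) (_ : a ≤ t 0) (_ : ∀ i < n, t i < t (i + 1)) (_ : t n ≤ b),
    ∑ i ∈ Finset.range n, ENNReal.ofReal (max (f (t (i + 1)) - f (t i) - c) 0)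

/-- Downward truncated variation `DTV^c(f,[a,b])`. -/
noncomputable def downTruncVar (f : ℝ → ℝ) (a b c : ℝ) : ℝ≥0∞ :=
  ⨆ (n : ℕ) (t : ℕ → ℝ) (_ : a ≤ t 0) (_ : ∀ i < n, t i < t (i + 1)) (_ : t n ≤ b),
    ∑ i ∈ Finset.range n, ENNReal.ofReal (max (f (t i) - f (t (i + 1)) - c) 0)

/-- `f` is càdlàg on `[a,b]`: right-continuous at every point of `[a,b)` and
with a finite left limit at every point of `(a,b]`. -/
def CadlagOn (f : ℝ → ℝ) (a b : ℝ) : Prop :=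
  (∀ x ∈ Set.Ico a b, Filter.Tendsto f (𝓝[>] x) (𝓝 (f x))) ∧
  (∀ x ∈ Set.Ioc a b, ∃ L : ℝ, Filter.Tendsto f (𝓝[<] x) (𝓝 L))

/-- The function `s ↦ UTV^c(f,[a,s])` is nondecreasing, càdlàg on `[a,b]`, and continuous
at every point of `(a,b)` at which `f` is continuous. -/
lemma steps_mono {t : ℕ → ℝ} {n : ℕ} (h : ∀ i < n, t i < t (i + 1)) :
    ∀ {i j}, i ≤ j → j ≤ n → t i ≤ t j := by
  intro i j hij hjn
  induction j with
  | zero => interval_cases i; exact le_rfl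
  | succ k ih =>
    rcases Nat.lt_or_ge i (k + 1) with h' | h'
    · exact le_trans (ih (Nat.lt_succ_iff.mp h') (by omega)) (h k (by omega)).le
    · have : i = k + 1 := le_antisymm hij h'
      rw [this]
  termination_by 0

lemma steps_strict {t : ℕ → ℝ} {n : ℕ} (h : ∀ i < n, t i < t (i + 1)) :
    ∀ {i j}, i < j → j ≤ n → t i < t j := by
  intro i j hij hjn
  obtain ⟨k, rfl⟩ : ∃ k, j = k + 1 := ⟨j - 1, by omega⟩
  exact lt_of_le_of_lt (steps_mono h (by omega) (by omega)) (h k (by omega))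

lemma le_upTruncVar (f : ℝ → ℝ) (a b c : ℝ) (n : ℕ) (t : ℕ → ℝ)
    (h0 : a ≤ t 0) (hst : ∀ i < n, t i < t (i + 1)) (hn : t n ≤ b) :
    ∑ i ∈ Finset.range n, ENNReal.ofReal (max (f (t (i + 1)) - f (t i) - c) 0)
      ≤ upTruncVar f a b c := by
  unfold upTruncVar
  exact le_iSup_of_le n <| le_iSup_of_le t <| le_iSup_of_le h0 <| le_iSup_of_le hst <|
    le_iSup_of_le hn le_rfl

lemma upTruncVar_le {f : ℝ → ℝ} {a b c : ℝ} {M : ℝ≥0∞}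
    (h : ∀ n (t : ℕ → ℝ), a ≤ t 0 → (∀ i < n, t i < t (i + 1)) → t n ≤ b →
      ∑ i ∈ Finset.range n, ENNReal.ofReal (max (f (t (i + 1)) - f (t i) - c) 0) ≤ M) :
    upTruncVar f a b c ≤ M := by
  unfold upTruncVar
  exact iSup_le fun n => iSup_le fun t => iSup_le fun h0 => iSup_le fun hst =>
    iSup_le fun hn => h n t h0 hst hn

lemma upTruncVar_of_le {f : ℝ → ℝ} {a b c : ℝ} (hc : 0 < c) (hba : b ≤ a) :
    upTruncVar f a b c = 0 := by
  refine le_antisymm (upTruncVar_le fun n t h0 hst hn => ?_) (zero_le)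
  match n with
  | 0 => simp
  | n + 1 =>
    exact absurd (steps_strict hst (Nat.succ_pos n) le_rfl)
      (by have := hn.trans (hba.trans h0); linarith)

lemma upTruncVar_mono (f : ℝ → ℝ) (a c : ℝ) {s s' : ℝ} (h : s ≤ s') :
    upTruncVar f a s c ≤ upTruncVar f a s' c :=
  upTruncVar_le fun n t h0 hst hn => le_upTruncVar f a s' c n t h0 hst (hn.trans h)

lemma sum_crossing_le (f : ℝ → ℝ) (a s c : ℝ) (hc : 0 < c) (t : ℕ → ℝ) (k : ℕ)
    (h0 : a ≤ t 0) (hst : ∀ i < k, t i < t (i + 1)) (hk : t k ≤ s) :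
    (∑ i ∈ Finset.range k, ENNReal.ofReal (max (f (t (i + 1)) - f (t i) - c) 0))
      + ENNReal.ofReal (max (f s - f (t k) - c) 0) ≤ upTruncVar f a s c := by
  rcases eq_or_lt_of_le hk with heq | hlt
  · have h1 : max (f s - f (t k) - c) 0 = 0 := by
      rw [heq]; simp; linarith
    rw [h1, ENNReal.ofReal_zero, add_zero]
    exact le_upTruncVar f a s c k t h0 hst hk
  · set t' : ℕ → ℝ := fun i => if i ≤ k then t i else s with ht'
    have h1 : t' (k + 1) = s := by simp [t']
    have hsum : ∑ i ∈ Finset.range (k + 1),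
          ENNReal.ofReal (max (f (t' (i + 1)) - f (t' i) - c) 0)
        = (∑ i ∈ Finset.range k, ENNReal.ofReal (max (f (t (i + 1)) - f (t i) - c) 0))
          + ENNReal.ofReal (max (f s - f (t k) - c) 0) := by
      rw [Finset.sum_range_succ]
      congr 1
      · refine Finset.sum_congr rfl fun i hi => ?_
        have hi' := Finset.mem_range.mp hi
        rw [show t' i = t i from if_pos (by omega), show t' (i + 1) = t (i + 1) from
          if_pos (by omega)]
      · rw [h1, show t' k = t k from if_pos le_rfl]
    rw [← hsum]
    have h00 : t' 0 = t 0 := if_pos (by omega)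
    refine le_upTruncVar f a s c (k + 1) t' (h00 ▸ h0) ?_ (le_of_eq h1)
    intro i hi
    rcases Nat.lt_or_ge i k with h' | h'
    · rw [show t' i = t i from if_pos (by omega), show t' (i + 1) = t (i + 1) from
        if_pos (by omega)]
      exact hst i h'
    · have : i = k := by omega
      subst this
      rw [show t' i = t i from if_pos le_rfl, show t' (i + 1) = s from if_neg (by omega)]
      exact hlt

lemma tail_sum_le (f : ℝ → ℝ) {c : ℝ} (hc : 0 < c) {s s' B2 : ℝ} (hB2 : 0 ≤ B2)
    (H2 : ∀ u v, s < u → u < v → v < s' → f v - f u ≤ c)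
    (H3 : ∀ u, s < u → u < s' → f s' - f u ≤ c + B2)
    (t : ℕ → ℝ) (n lo : ℕ) (hst : ∀ i < n, t i < t (i + 1)) (hn : t n ≤ s')
    (hgt : ∀ i, lo ≤ i → i ≤ n → s < t i) :
    ∑ i ∈ Finset.Ico lo n, ENNReal.ofReal (max (f (t (i + 1)) - f (t i) - c) 0)
      ≤ ENNReal.ofReal B2 := by
  rcases Nat.lt_or_ge lo n with hlo | hlo
  swap
  · rw [Finset.Ico_eq_empty (by omega)]; simp
  obtain ⟨p, rfl⟩ : ∃ p, n = p + 1 := ⟨n - 1, by omega⟩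
  rw [Finset.sum_Ico_succ_top (by omega : lo ≤ p)]
  have hzero : ∀ i ∈ Finset.Ico lo p,
      ENNReal.ofReal (max (f (t (i + 1)) - f (t i) - c) 0) = 0 := by
    intro i hi
    obtain ⟨hi1, hi2⟩ := Finset.mem_Ico.mp hi
    have hsu : s < t i := hgt i hi1 (by omega)
    have h1 : t i < t (i + 1) := hst i (by omega)
    have h2 : t (i + 1) < s' := lt_of_lt_of_le (steps_strict hst (by omega) le_rfl) hn
    have h3 := H2 (t i) (t (i + 1)) hsu h1 h2
    rw [ENNReal.ofReal_eq_zero]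
    simp; linarith
  rw [Finset.sum_eq_zero hzero, zero_add]
  have hsp : s < t p := hgt p (by omega) (by omega)
  rcases lt_or_eq_of_le hn with hlt | heq
  · have h3 := H2 (t p) (t (p + 1)) hsp (hst p (by omega)) hlt
    refine le_trans (le_of_eq ?_) (zero_le)
    rw [ENNReal.ofReal_eq_zero]
    simp; linarith
  · have h2 : t p < s' := heq ▸ hst p (by omega)
    have h3 := H3 (t p) hsp h2
    apply ENNReal.ofReal_le_ofReal
    rw [← heq] at h3
    exact max_le (by linarith) hB2

lemma upTruncVar_le_add (f : ℝ → ℝ) (a : ℝ) {c s s' B B2 : ℝ} (hc : 0 < c)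
    (has : a ≤ s) (hB : 0 ≤ B) (hB2 : 0 ≤ B2)
    (H1 : ∀ u, s < u → u ≤ s' → f u - f s ≤ B)
    (H2 : ∀ u v, s < u → u < v → v < s' → f v - f u ≤ c)
    (H3 : ∀ u, s < u → u < s' → f s' - f u ≤ c + B2) :
    upTruncVar f a s' c ≤ upTruncVar f a s c + ENNReal.ofReal B + ENNReal.ofReal B2 := by
  refine upTruncVar_le fun n t h0 hst hn => ?_
  by_cases h01 : t 0 ≤ s
  · classical
    set k := Nat.findGreatest (fun i => t i ≤ s) n with hkdef
    have hkn : k ≤ n := Nat.findGreatest_le n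
    have hks : t k ≤ s := Nat.findGreatest_spec (P := fun i => t i ≤ s) (Nat.zero_le n) h01
    have hgt : ∀ i, k < i → i ≤ n → s < t i := fun i hi1 hi2 =>
      lt_of_not_ge (Nat.findGreatest_is_greatest hi1 hi2)
    rcases eq_or_lt_of_le hkn with heq | hkn'
    · exact le_trans (le_upTruncVar f a s c n t h0 hst (heq ▸ hks))
        (le_trans le_self_add le_self_add)
    · rw [Finset.range_eq_Ico, ← Finset.sum_Ico_consecutive _ (Nat.zero_le k) (le_of_lt hkn'),
        Finset.sum_eq_sum_Ico_succ_bot hkn']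
      have hcross : ENNReal.ofReal (max (f (t (k + 1)) - f (t k) - c) 0)
          ≤ ENNReal.ofReal (max (f s - f (t k) - c) 0) + ENNReal.ofReal B := by
        rw [← ENNReal.ofReal_add (le_max_right _ _) hB]
        apply ENNReal.ofReal_le_ofReal
        have hb1 : f (t (k + 1)) - f s ≤ B :=
          H1 (t (k + 1)) (hgt (k + 1) (by omega) hkn') (le_trans (steps_mono hst (by omega) le_rfl) hn)
        have := le_max_left (f s - f (t k) - c) 0
        have := le_max_right (f s - f (t k) - c) 0
        exact max_le (by linarith) (by linarith)
      have htail : ∑ i ∈ Finset.Ico (k + 1) n,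
            ENNReal.ofReal (max (f (t (i + 1)) - f (t i) - c) 0) ≤ ENNReal.ofReal B2 :=
        tail_sum_le f hc hB2 H2 H3 t n (k + 1) hst hn fun i hi1 hi2 => hgt i (by omega) hi2
      calc (∑ i ∈ Finset.Ico 0 k, ENNReal.ofReal (max (f (t (i + 1)) - f (t i) - c) 0))
            + (ENNReal.ofReal (max (f (t (k + 1)) - f (t k) - c) 0)
              + ∑ i ∈ Finset.Ico (k + 1) n, ENNReal.ofReal (max (f (t (i + 1)) - f (t i) - c) 0))
          ≤ (∑ i ∈ Finset.Ico 0 k, ENNReal.ofReal (max (f (t (i + 1)) - f (t i) - c) 0))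
            + ((ENNReal.ofReal (max (f s - f (t k) - c) 0) + ENNReal.ofReal B)
              + ENNReal.ofReal B2) := by
            exact add_le_add le_rfl (add_le_add hcross htail)
        _ = ((∑ i ∈ Finset.Ico 0 k, ENNReal.ofReal (max (f (t (i + 1)) - f (t i) - c) 0))
              + ENNReal.ofReal (max (f s - f (t k) - c) 0)) + ENNReal.ofReal B
              + ENNReal.ofReal B2 := by ring
        _ ≤ upTruncVar f a s c + ENNReal.ofReal B + ENNReal.ofReal B2 := by
            gcongr
            rw [← Finset.range_eq_Ico]
            exact sum_crossing_le f a s c hc t k h0 (fun i hi => hst i (by omega)) hks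
  · have hgt : ∀ i, 0 ≤ i → i ≤ n → s < t i := fun i _ hi =>
      lt_of_lt_of_le (lt_of_not_ge h01) (steps_mono hst (Nat.zero_le i) hi)
    have := tail_sum_le f hc hB2 H2 H3 t n 0 hst hn hgt
    rw [← Finset.range_eq_Ico] at this
    exact le_trans this (le_add_self)

lemma upTruncVar_ne_top {a b c : ℝ} (hab : a < b) (hc : 0 < c) {f : ℝ → ℝ}
    (hf : CadlagOn f a b) : upTruncVar f a b c ≠ ⊤ := by
  set S : Set ℝ := {s | s ∈ Icc a b ∧ upTruncVar f a s c ≠ ⊤} with hS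
  have hane : a ∈ S := ⟨⟨le_rfl, hab.le⟩, by rw [upTruncVar_of_le hc le_rfl]; exact zero_ne_top⟩
  have hbdd : BddAbove S := ⟨b, fun x hx => hx.1.2⟩
  set m := sSup S with hm
  have ham : a ≤ m := le_csSup hbdd hane
  have hmb : m ≤ b := csSup_le ⟨a, hane⟩ fun x hx => hx.1.2
  have hmem : m ∈ S := by
    rcases eq_or_lt_of_le ham with heq | ham'
    · rw [← heq]; exact hane
    · obtain ⟨L, hL⟩ := hf.2 m ⟨ham', hmb⟩
      have hev : ∀ᶠ u in 𝓝[<] m, |f u - L| < c / 2 := by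
        have := Metric.tendsto_nhds.mp hL (c / 2) (by positivity)
        simpa [Real.dist_eq] using this
      obtain ⟨l, hl, hsub⟩ := mem_nhdsLT_iff_exists_Ioo_subset.mp hev
      obtain ⟨s, hsS, hs_gt⟩ := exists_lt_of_lt_csSup ⟨a, hane⟩
        (show max l a < m from max_lt hl ham')
      have hsm : s ≤ m := le_csSup hbdd hsS
      rcases eq_or_lt_of_le hsm with heq2 | hsm'
      · rw [← heq2]; exact hsS
      · have hsIoo : s ∈ Ioo l m := ⟨lt_of_le_of_lt (le_max_left l a) hs_gt, hsm'⟩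
        have hfs : |f s - L| < c / 2 := hsub hsIoo
        have habs : (0:ℝ) ≤ |f m - L| := abs_nonneg _
        have key := upTruncVar_le_add f a (s := s) (s' := m) (B := c + |f m - L|) (B2 := |f m - L|) hc
          hsS.1.1 (by linarith) habs
          (fun u hu1 hu2 => by
            rcases eq_or_lt_of_le hu2 with he | hlt
            · have h1 := le_abs_self (f m - L)
              have h2 := abs_lt.mp hfs
              rw [he]; linarith
            · have := abs_lt.mp (show |_| < c / 2 from hsub ⟨lt_trans hsIoo.1 hu1, hlt⟩)
              have h2 := abs_lt.mp hfs
              linarith)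
          (fun u v hu hv hv' => by
            have h1 := abs_lt.mp (show |_| < c / 2 from hsub ⟨lt_trans hsIoo.1 hu, lt_trans hv hv'⟩)
            have h2 := abs_lt.mp (show |_| < c / 2 from hsub ⟨lt_trans hsIoo.1 (lt_trans hu hv), hv'⟩)
            linarith)
          (fun u hu1 hu2 => by
            have h1 := abs_lt.mp (show |_| < c / 2 from hsub ⟨lt_trans hsIoo.1 hu1, hu2⟩)
            have h2 := le_abs_self (f m - L)
            linarith)
        refine ⟨⟨ham, hmb⟩, ne_top_of_le_ne_top ?_ key⟩
        exact ENNReal.add_ne_top.mpr ⟨ENNReal.add_ne_top.mpr ⟨hsS.2, ofReal_ne_top⟩, ofReal_ne_top⟩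
  have hmb' : m = b := by
    by_contra hne
    have hmltb : m < b := lt_of_le_of_ne hmb hne
    have hev : ∀ᶠ u in 𝓝[>] m, |f u - f m| < c / 2 := by
      have := Metric.tendsto_nhds.mp (hf.1 m ⟨ham, hmltb⟩) (c / 2) (by positivity)
      simpa [Real.dist_eq] using this
    obtain ⟨r, hr, hsub⟩ := mem_nhdsGT_iff_exists_Ioo_subset.mp hev
    set s' := (m + min r b) / 2 with hs'
    have hmin : m < min r b := lt_min hr hmltb
    have hs1 : m < s' := by rw [hs']; linarith
    have hs2 : s' < min r b := by rw [hs']; linarith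
    have hs'r : s' < r := lt_of_lt_of_le hs2 (min_le_left _ _)
    have hs'b : s' ≤ b := (lt_of_lt_of_le hs2 (min_le_right _ _)).le
    have key := upTruncVar_le_add f a (s := m) (s' := s') (B := c / 2) (B2 := 0) hc
      ham (by positivity) le_rfl
      (fun u hu1 hu2 => (abs_lt.mp (show |_| < c / 2 from hsub ⟨hu1, lt_of_le_of_lt hu2 hs'r⟩)).2.le)
      (fun u v hu hv hv' => by
        have h1 := abs_lt.mp (show |_| < c / 2 from hsub ⟨hu, lt_trans (lt_trans hv hv') hs'r⟩)
        have h2 := abs_lt.mp (show |_| < c / 2 from hsub ⟨lt_trans hu hv, lt_trans hv' hs'r⟩)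
        linarith)
      (fun u hu1 hu2 => by
        have h1 := abs_lt.mp (show |_| < c / 2 from hsub ⟨hu1, lt_trans hu2 hs'r⟩)
        have h2 := abs_lt.mp (show |_| < c / 2 from hsub ⟨hs1, hs'r⟩)
        linarith)
    have hfin : upTruncVar f a s' c ≠ ⊤ := ne_top_of_le_ne_top
      (ENNReal.add_ne_top.mpr ⟨ENNReal.add_ne_top.mpr ⟨hmem.2, ofReal_ne_top⟩, ofReal_ne_top⟩) key
    have : s' ≤ m := le_csSup hbdd ⟨⟨le_trans ham hs1.le, hs'b⟩, hfin⟩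
    linarith
  rw [← hmb']
  exact hmem.2

theorem upTruncVar_monotone_cadlag
    (a b c : ℝ) (hab : a < b) (hc : 0 < c) (f : ℝ → ℝ) (hf : CadlagOn f a b) :
    MonotoneOn (fun s => (upTruncVar f a s c).toReal) (Set.Icc a b) ∧
    (∀ x ∈ Set.Ico a b, Filter.Tendsto (fun s => (upTruncVar f a s c).toReal)
      (𝓝[>] x) (𝓝 ((upTruncVar f a x c).toReal))) ∧
    (∀ x ∈ Set.Ioc a b, ∃ L : ℝ, Filter.Tendsto (fun s => (upTruncVar f a s c).toReal)
      (𝓝[<] x) (𝓝 L)) ∧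
    (∀ x ∈ Set.Ioo a b, ContinuousWithinAt f (Set.Icc a b) x →
      ContinuousWithinAt (fun s => (upTruncVar f a s c).toReal) (Set.Icc a b) x) := by
  have hfinb : upTruncVar f a b c ≠ ⊤ := upTruncVar_ne_top hab hc hf
  have hfin : ∀ s, s ≤ b → upTruncVar f a s c ≠ ⊤ := fun s hs =>
    ne_top_of_le_ne_top hfinb (upTruncVar_mono f a c hs)
  set u : ℝ → ℝ := fun s => (upTruncVar f a s c).toReal with hu
  have humono : ∀ s s', s ≤ s' → s' ≤ b → u s ≤ u s' := fun s s' h h' =>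
    ENNReal.toReal_mono (hfin s' h') (upTruncVar_mono f a c h)
  have hRC : ∀ x ∈ Ico a b, Tendsto u (𝓝[>] x) (𝓝 (u x)) := by
    intro x hx
    rw [Metric.tendsto_nhds]
    intro ε hε
    set η := min (ε / 2) (c / 2) with hηdef
    have hηpos : 0 < η := lt_min (by linarith) (by linarith)
    have hηc : η ≤ c / 2 := min_le_right _ _
    have hηε : η ≤ ε / 2 := min_le_left _ _
    have hev : ∀ᶠ v in 𝓝[>] x, |f v - f x| < η := by
      have := Metric.tendsto_nhds.mp (hf.1 x hx) η hηpos
      simpa [Real.dist_eq] using this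
    obtain ⟨r, hr, hsub⟩ := mem_nhdsGT_iff_exists_Ioo_subset.mp hev
    have hmem : Ioo x (min r b) ∈ 𝓝[>] x :=
      Ioo_mem_nhdsGT_of_mem ⟨le_rfl, lt_min hr hx.2⟩
    filter_upwards [hmem] with s hs
    have hsb : s ≤ b := (lt_of_lt_of_le hs.2 (min_le_right _ _)).le
    have hsr : s < r := lt_of_lt_of_le hs.2 (min_le_left _ _)
    have key := upTruncVar_le_add f a (s := x) (s' := s) (B := η) (B2 := 0) hc hx.1
      hηpos.le le_rfl
      (fun v hv1 hv2 =>
        (abs_lt.mp (show |_| < η from hsub ⟨hv1, lt_of_le_of_lt hv2 hsr⟩)).2.le)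
      (fun v w hv hw hw' => by
        have h1 := abs_lt.mp (show |_| < η from hsub ⟨hv, lt_trans (lt_trans hw hw') hsr⟩)
        have h2 := abs_lt.mp (show |_| < η from hsub ⟨lt_trans hv hw, lt_trans hw' hsr⟩)
        linarith)
      (fun v hv1 hv2 => by
        have h1 := abs_lt.mp (show |_| < η from hsub ⟨hv1, lt_trans hv2 hsr⟩)
        have h2 := abs_lt.mp (show |_| < η from hsub ⟨hs.1, hsr⟩)
        linarith)
    have h1 : u s ≤ u x + η := by
      have h2 : (upTruncVar f a x c + ENNReal.ofReal η + ENNReal.ofReal 0).toReal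
          = u x + η := by
        rw [ofReal_zero, add_zero, ENNReal.toReal_add (hfin x hx.2.le) ofReal_ne_top,
          ENNReal.toReal_ofReal hηpos.le]
      rw [← h2]
      exact ENNReal.toReal_mono (by
        rw [ofReal_zero, add_zero]
        exact ENNReal.add_ne_top.mpr ⟨hfin x hx.2.le, ofReal_ne_top⟩) key
    have h3 : u x ≤ u s := humono x s hs.1.le hsb
    rw [Real.dist_eq, abs_lt]
    constructor <;> linarith
  refine ⟨fun s hs s' hs' h => humono s s' h hs'.2, hRC, ?_, ?_⟩
  · intro x hx
    have hmono : MonotoneOn u (Iio x) := fun s hs s' hs' h =>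
      humono s s' h (le_trans (le_of_lt hs') hx.2)
    have hbdd : BddAbove (u '' Iio x) := by
      refine ⟨u b, ?_⟩
      rintro _ ⟨s, hs, rfl⟩
      exact humono s b (le_trans hs.le hx.2) le_rfl
    exact ⟨_, hmono.tendsto_nhdsLT hbdd⟩
  · intro x hx hfx
    have hfc : ContinuousAt f x := hfx.continuousAt (Icc_mem_nhds hx.1 hx.2)
    have hleft : Tendsto u (𝓝[<] x) (𝓝 (u x)) := by
      rw [Metric.tendsto_nhds]
      intro ε hε
      set η := min (ε / 4) (c / 4) with hηdef
      have hηpos : 0 < η := lt_min (by linarith) (by linarith)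
      have hηc : η ≤ c / 4 := min_le_right _ _
      have hηε : η ≤ ε / 4 := min_le_left _ _
      have hev : ∀ᶠ v in 𝓝[<] x, |f v - f x| < η := by
        have := Metric.tendsto_nhds.mp (show Tendsto f (𝓝[<] x) (𝓝 (f x)) from
          hfc.tendsto.mono_left nhdsWithin_le_nhds) η hηpos
        simpa [Real.dist_eq] using this
      obtain ⟨l, hl, hsub⟩ := mem_nhdsLT_iff_exists_Ioo_subset.mp hev
      have hmem : Ioo (max l a) x ∈ 𝓝[<] x :=
        Ioo_mem_nhdsLT_of_mem ⟨max_lt hl hx.1, le_rfl⟩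
      filter_upwards [hmem] with s hs
      have has : a ≤ s := le_trans (le_max_right l a) hs.1.le
      have hls : l < s := lt_of_le_of_lt (le_max_left l a) hs.1
      have hfs := abs_lt.mp (show |_| < η from hsub ⟨hls, hs.2⟩)
      have key := upTruncVar_le_add f a (s := s) (s' := x) (B := 2 * η) (B2 := 0) hc has
        (by linarith) le_rfl
        (fun v hv1 hv2 => by
          rcases eq_or_lt_of_le hv2 with he | hlt
          · rw [he]; linarith
          · have h1 := abs_lt.mp (show |_| < η from hsub ⟨lt_trans hls hv1, hlt⟩)
            linarith)
        (fun v w hv hw hw' => by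
          have h1 := abs_lt.mp (show |_| < η from hsub ⟨lt_trans hls hv, lt_trans hw hw'⟩)
          have h2 := abs_lt.mp (show |_| < η from hsub ⟨lt_trans hls (lt_trans hv hw), hw'⟩)
          linarith)
        (fun v hv1 hv2 => by
          have h1 := abs_lt.mp (show |_| < η from hsub ⟨lt_trans hls hv1, hv2⟩)
          linarith)
      have h1 : u x ≤ u s + 2 * η := by
        have h2 : (upTruncVar f a s c + ENNReal.ofReal (2 * η) + ENNReal.ofReal 0).toReal
            = u s + 2 * η := by
          rw [ofReal_zero, add_zero, ENNReal.toReal_add (hfin s (le_trans hs.2.le hx.2.le))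
            ofReal_ne_top, ENNReal.toReal_ofReal (by linarith)]
        rw [← h2]
        exact ENNReal.toReal_mono (by
          rw [ofReal_zero, add_zero]
          exact ENNReal.add_ne_top.mpr ⟨hfin s (le_trans hs.2.le hx.2.le), ofReal_ne_top⟩) key
      have h3 : u s ≤ u x := humono s x hs.2.le hx.2.le
      rw [Real.dist_eq, abs_lt]
      constructor <;> linarith
    have hright : Tendsto u (𝓝[>] x) (𝓝 (u x)) := hRC x ⟨hx.1.le, hx.2⟩
    have hca : ContinuousAt u x := continuousAt_iff_continuous_left_right.mpr
      ⟨continuousWithinAt_Iio_iff_Iic.mp hleft, continuousWithinAt_Ioi_iff_Ici.mp hright⟩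
    exact hca.continuousWithinAt
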